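/- For every S ⊆ B, the quantity ⟨ψ| 1_S H 1_{B∖S} |ψ⟩ = ∑_{x∈S, y∈B∖S} conj(ψ_x) H_{xy} ψ_y is a real number and is less than or equal to zero. -/

import Mathlib

open scoped BigOperators ComplexOrder
open Matrix

/-- The ℓ²-operator norm of a matrix over ℂ. -/
noncomputable def opNorm {B : Type*} [Fintype B] [DecidableEq B] (H : Matrix B B ℂ) : ℝ :=
  ‖Matrix.toEuclideanCLM (𝕜 := ℂ) H‖

/-- The ground-state probability measure of a subset `S`. -/
noncomputable def piS {B : Type*} (ψ : B → ℂ) (S : Finset B) : ℝ :=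
  ∑ z ∈ S, ‖ψ z‖ ^ 2

open scoped Classical in
/-- The interior boundary `∂S` of the set `S` with respect to the matrix `H`. -/
noncomputable def bdry {B : Type*} [Fintype B] (H : Matrix B B ℂ) (S : Finset B) : Finset B :=
  S.filter (fun x => ∃ y ∉ S, H x y ≠ 0)

/-- For the ground state `ψ` of a Hermitian matrix `H`, the quantity
`⟨ψ|1_S H 1_{B∖S}|ψ⟩` is real and non-positive, for every `S ⊆ B`. -/
theorem stmt_5 {B : Type*} [Fintype B] [DecidableEq B]
    (H : Matrix B B ℂ) (hH : H.IsHermitian)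
    -- `ψ` is a unit-norm eigenvector for the smallest eigenvalue `E₀`:
    (E₀ : ℝ) (ψ : B → ℂ) (hψnorm : ∑ z, ‖ψ z‖ ^ 2 = 1)
    (hground : H.mulVec ψ = (E₀ : ℂ) • ψ)
    (hleast : ∀ i, E₀ ≤ hH.eigenvalues i)
    (S : Finset B) :
    (∑ x ∈ S, ∑ y ∈ Sᶜ, (starRingEnd ℂ) (ψ x) * H x y * ψ y).im = 0 ∧
    (∑ x ∈ S, ∑ y ∈ Sᶜ, (starRingEnd ℂ) (ψ x) * H x y * ψ y).re ≤ 0 := by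
  classical
  set M : Matrix B B ℂ := H - (E₀ : ℂ) • 1 with hM
  -- positivity of the shifted quadratic form
  have key : ∀ x : B → ℂ, 0 ≤ dotProduct (star x) (M *ᵥ x) := by
    intro x
    have hsplit : dotProduct (star x) (M *ᵥ x)
        = dotProduct (star x) (H *ᵥ x) - (E₀ : ℂ) * dotProduct (star x) x := by
      simp [hM, Matrix.sub_mulVec, dotProduct_sub, Matrix.smul_mulVec,
        Matrix.one_mulVec, dotProduct_smul, smul_eq_mul]
    set U : Matrix B B ℂ := (hH.eigenvectorUnitary : Matrix B B ℂ) with hU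
    set y : B → ℂ := star U *ᵥ x with hy
    have hUU : U * star U = 1 := (Matrix.mem_unitaryGroup_iff).mp hH.eigenvectorUnitary.2
    have hstar_y : star y = star x ᵥ* U := by
      rw [hy, Matrix.star_mulVec]
      rw [Matrix.star_eq_conjTranspose, Matrix.conjTranspose_conjTranspose]
    have hHx : dotProduct (star x) (H *ᵥ x)
        = ∑ i, (starRingEnd ℂ) (y i) * ((hH.eigenvalues i : ℂ) * y i) := by
      conv_lhs => rw [hH.spectral_theorem, Unitary.conjStarAlgAut_apply]
      rw [← Matrix.mulVec_mulVec, ← Matrix.mulVec_mulVec, Matrix.dotProduct_mulVec, ← hstar_y]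
      simp [dotProduct, Matrix.mulVec_diagonal]
      rfl
    have hxx : dotProduct (star x) x = ∑ i, (starRingEnd ℂ) (y i) * y i := by
      have h2 : dotProduct (star y) y = dotProduct (star x) x := by
        rw [hstar_y, ← Matrix.dotProduct_mulVec, Matrix.mulVec_mulVec, hUU, Matrix.one_mulVec]
      rw [← h2]; simp [dotProduct]
    rw [hsplit, hHx, hxx, Finset.mul_sum, ← Finset.sum_sub_distrib]
    apply Finset.sum_nonneg
    intro i _
    have h3 : (starRingEnd ℂ) (y i) * ((hH.eigenvalues i : ℂ) * y i)
        - (E₀ : ℂ) * ((starRingEnd ℂ) (y i) * y i)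
        = ((hH.eigenvalues i - E₀ : ℝ) : ℂ) * ((Complex.normSq (y i) : ℝ) : ℂ) := by
      rw [Complex.ofReal_sub]
      have := Complex.normSq_eq_conj_mul_self (z := y i)
      push_cast [this]
      ring
    rw [h3]
    apply mul_nonneg
    · rw [Complex.zero_le_real]
      linarith [hleast i]
    · exact Complex.zero_le_real.2 (Complex.normSq_nonneg _)
  -- the decomposition ψ = u + v
  set u : B → ℂ := fun z => if z ∈ S then ψ z else 0 with hu
  set v : B → ℂ := fun z => if z ∈ S then 0 else ψ z with hv
  have hψuv : ψ = u + v := by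
    funext z
    by_cases h : z ∈ S <;> simp [hu, hv, h]
  have hMψ : M *ᵥ ψ = 0 := by
    rw [hM, Matrix.sub_mulVec, hground, Matrix.smul_mulVec, Matrix.one_mulVec, sub_self]
  -- the cross term
  set X : ℂ := dotProduct (star u) (M *ᵥ v) with hXdef
  have hX : X = ∑ x ∈ S, ∑ y ∈ Sᶜ, (starRingEnd ℂ) (ψ x) * H x y * ψ y := by
    rw [hXdef]
    have h1 : dotProduct (star u) (M *ᵥ v)
        = ∑ x, ∑ y, (starRingEnd ℂ) (u x) * (M x y * v y) := by
      simp [dotProduct, Matrix.mulVec, Finset.mul_sum]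
    rw [h1]
    rw [← Finset.sum_subset (Finset.subset_univ S)]
    · refine Finset.sum_congr rfl fun x hx => ?_
      rw [← Finset.sum_subset (Finset.subset_univ Sᶜ)]
      · refine Finset.sum_congr rfl fun y hy => ?_
        rw [Finset.mem_compl] at hy
        have hxy : x ≠ y := fun h => hy (h ▸ hx)
        simp [hu, hv, hx, hy, hM, Matrix.sub_apply, Matrix.smul_apply, Matrix.one_apply, hxy,
          mul_assoc]
      · intro y _ hy
        rw [Finset.mem_compl, not_not] at hy
        simp [hv, hy]
    · intro x _ hx
      simp [hu, hx]
  -- hermitian conjugate cross term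
  have hMH : Mᴴ = M := by
    rw [hM, Matrix.conjTranspose_sub, hH.eq, Matrix.conjTranspose_smul]
    simp
  have hY : dotProduct (star v) (M *ᵥ u) = (starRingEnd ℂ) X := by
    rw [hXdef]
    simp only [dotProduct, Matrix.mulVec, map_sum, Finset.mul_sum]
    rw [Finset.sum_comm]
    refine Finset.sum_congr rfl fun x _ => Finset.sum_congr rfl fun y _ => ?_
    have hMxy : (starRingEnd ℂ) (M x y) = M y x := by
      have := congrFun (congrFun hMH y) x
      simpa [Matrix.conjTranspose_apply] using this
    simp only [Pi.star_apply, RCLike.star_def, RingHom.coe_coe]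
    rw [_root_.map_mul, _root_.map_mul, Complex.conj_conj, hMxy]
    ring
  set A : ℂ := dotProduct (star u) (M *ᵥ u) with hA
  set Dq : ℂ := dotProduct (star v) (M *ᵥ v) with hDq
  have expand : ∀ c : ℂ, dotProduct (star (u + c • v)) (M *ᵥ (u + c • v))
      = A + ((starRingEnd ℂ) c * c) * Dq + c * X + (starRingEnd ℂ) c * (starRingEnd ℂ) X := by
    intro c
    rw [star_add, star_smul, Matrix.mulVec_add, Matrix.mulVec_smul, add_dotProduct,
      dotProduct_add, dotProduct_add, smul_dotProduct,
      smul_dotProduct, dotProduct_smul, dotProduct_smul]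
    rw [← hXdef, ← hA, ← hDq, hY]
    simp only [smul_eq_mul, RCLike.star_def, RingHom.coe_coe]
    ring
  have base : A + Dq + (X + (starRingEnd ℂ) X) = 0 := by
    have h0 : dotProduct (star ψ) (M *ᵥ ψ) = 0 := by
      rw [hMψ, dotProduct_zero]
    have h1 := expand 1
    rw [one_smul, ← hψuv, h0, _root_.map_one] at h1
    linear_combination -h1
  -- the positivity inequality, for unit scalars c
  have hre : ∀ c : ℂ, (starRingEnd ℂ) c * c = 1 → X.re ≤ (c * X).re := by
    intro c hc
    have hpos := key (u + c • v)
    rw [expand c, hc, one_mul] at hpos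
    have hAD : A + Dq = -(X + (starRingEnd ℂ) X) := by linear_combination base
    rw [Complex.le_def] at hpos
    have h2 := hpos.1
    have hconj : (starRingEnd ℂ) c * (starRingEnd ℂ) X = (starRingEnd ℂ) (c * X) :=
      ((starRingEnd ℂ).map_mul c X).symm
    rw [hAD, hconj] at h2
    simp only [Complex.add_re, Complex.neg_re, Complex.conj_re, Complex.zero_re] at h2
    linarith
  -- conclude
  rw [← hX]
  by_cases hX0 : X = 0
  · simp [hX0]
  · set r : ℝ := ‖X‖ with hr
    have hrpos : 0 < r := by
      rw [hr]
      exact norm_pos_iff.mpr hX0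
    set c : ℂ := -((starRingEnd ℂ) X) * ((r : ℂ))⁻¹ with hc
    have hrne : ((r : ℂ)) ≠ 0 := by
      exact_mod_cast hrpos.ne'
    have habs : X * (starRingEnd ℂ) X = ((r : ℂ)) ^ 2 := by
      rw [Complex.mul_conj]
      norm_cast
      rw [hr, Complex.sq_norm]
    have hcunit : (starRingEnd ℂ) c * c = 1 := by
      have hconjc : (starRingEnd ℂ) c = -X * ((r : ℂ))⁻¹ := by
        rw [hc]
        simp [map_inv₀, Complex.conj_ofReal]
      rw [hconjc, hc]
      field_simp
      linear_combination habs
    have hcX : (c * X).re = -r := by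
      have h4 : c * X = ((-r : ℝ) : ℂ) := by
        rw [hc]
        have h5 : -(starRingEnd ℂ) X * ((r : ℂ))⁻¹ * X
            = -(X * (starRingEnd ℂ) X) * ((r : ℂ))⁻¹ := by ring
        rw [h5, habs]
        push_cast
        field_simp
      rw [h4, Complex.ofReal_re]
    have h5 : X.re ≤ -r := by
      have := hre c hcunit
      rw [hcX] at this
      exact this
    have h6 : -r ≤ X.re := by
      have h7 : |X.re| ≤ r := by rw [hr]; exact Complex.abs_re_le_norm X
      linarith [neg_abs_le X.re, (abs_le.mp h7).1]
    have hXre : X.re = -r := le_antisymm h5 h6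
    have hsq : r ^ 2 = X.re * X.re + X.im * X.im := by
      rw [hr, ← Complex.normSq_apply, ← Complex.sq_norm]
    have him : X.im = 0 := by
      have h8 : X.im * X.im = 0 := by nlinarith
      exact mul_self_eq_zero.mp h8
    exact ⟨him, by linarith⟩
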